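/- arXiv:1804.10853 — 3 statements merged into one kernel-verified Lean document; each statement's English description precedes it below -/
import Mathlib

section
/- Let M be a connected n-dimensional smooth manifold and let E be a proper closed subset of M with nonempty interior. Then the dimension of the topological boundary ∂E of E in M is at least n − 1, i.e., for every s with 0 < s < n − 1, ∂E is not of 𝓗ˢ-measure zero. -/
open Manifold Set MeasureTheory Metric Module
open scoped ENNReal NNReal

lemma stmt6_aux {n : ℕ} {c : EuclideanSpace ℝ (Fin n)} {r : ℝ}
    {G H : Set (EuclideanSpace ℝ (Fin n))} (hG : IsOpen G) (hH : IsOpen H)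
    (hGH : Disjoint G H) (hg : (G ∩ Metric.ball c r).Nonempty)
    (hh : (H ∩ Metric.ball c r).Nonempty) :
    ((n - 1 : ℕ) : ℝ≥0∞) ≤ dimH (Metric.ball c r \ (G ∪ H)) := by
  obtain ⟨g, hgG, hgB⟩ := hg
  obtain ⟨h, hhH, hhB⟩ := hh
  obtain ⟨δ₁, hδ₁pos, hδ₁⟩ := Metric.isOpen_iff.1 (hG.inter isOpen_ball) g ⟨hgG, hgB⟩
  obtain ⟨δ₂, hδ₂pos, hδ₂⟩ := Metric.isOpen_iff.1 (hH.inter isOpen_ball) h ⟨hhH, hhB⟩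
  set δ := min δ₁ δ₂ with hδ
  have hδpos : 0 < δ := lt_min hδ₁pos hδ₂pos
  have hgδ : Metric.ball g δ ⊆ G ∩ Metric.ball c r :=
    (Metric.ball_subset_ball (min_le_left _ _)).trans hδ₁
  have hhδ : Metric.ball h δ ⊆ H ∩ Metric.ball c r :=
    (Metric.ball_subset_ball (min_le_right _ _)).trans hδ₂
  set u := h - g with hu
  have hune : u ≠ 0 := by
    intro h0
    have : h = g := by rwa [hu, sub_eq_zero] at h0
    exact hGH.ne_of_mem hgG hhH this.symm
  set K : Submodule ℝ (EuclideanSpace ℝ (Fin n)) := (ℝ ∙ u)ᗮ with hK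
  have hfr : finrank ℝ K = n - 1 := by
    have h1 : finrank ℝ (ℝ ∙ u) = 1 := finrank_span_singleton hune
    have := Submodule.finrank_add_finrank_orthogonal (K := (ℝ ∙ u))
    rw [h1, finrank_euclideanSpace_fin] at this
    rw [hK]
    omega
  set π := K.orthogonalProjectionOnto with hπ
  set S := Metric.ball c r \ (G ∪ H) with hS
  have hπu : π u = 0 := Submodule.orthogonalProjectionOnto_orthogonalComplement_singleton_eq_zero u
  have claim : ∀ k : K, k ∈ Metric.ball (0 : K) δ → π g + k ∈ π '' S := by
    intro k hk
    have hkv : ‖(k : EuclideanSpace ℝ (Fin n))‖ < δ := by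
      simpa [Metric.mem_ball, dist_zero_right] using hk
    set v : EuclideanSpace ℝ (Fin n) := (k : EuclideanSpace ℝ (Fin n)) with hv
    have hgv : g + v ∈ G ∩ Metric.ball c r := hgδ (by
      simp [Metric.mem_ball, dist_self_add_left, hkv])
    have hhv : h + v ∈ H ∩ Metric.ball c r := hhδ (by
      simp [Metric.mem_ball, dist_self_add_left, hkv])
    have hseg : segment ℝ (g + v) (h + v) ⊆ Metric.ball c r :=
      (convex_ball c r).segment_subset hgv.2 hhv.2
    have : ¬ segment ℝ (g + v) (h + v) ⊆ G ∪ H := by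
      intro hsub
      rcases (convex_segment _ _).isPreconnected.subset_or_subset hG hH hGH hsub with h' | h'
      · exact hGH.ne_of_mem (h' (right_mem_segment ℝ _ _)) hhv.1 rfl
      · exact hGH.ne_of_mem hgv.1 (h' (left_mem_segment ℝ _ _)) rfl
    obtain ⟨p, hpseg, hpGH⟩ := not_subset.1 this
    refine ⟨p, ⟨hseg hpseg, hpGH⟩, ?_⟩
    obtain ⟨a, b, ha, hb, hab, hp⟩ := hpseg
    have hpe : p = g + v + b • u := by
      rw [← hp, hu]
      have : a = 1 - b := by linarith
      rw [this]
      module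
    rw [hpe]
    have : π (g + v + b • u) = π g + π v + b • π u := by
      simp [map_add, _root_.map_smul]
    rw [this, hπu, smul_zero, add_zero]
    congr 1
    exact Submodule.orthogonalProjectionOnto_mem_subspace_eq_self k
  have htrans : Isometry (fun k : K => π g + k) :=
    Isometry.of_dist_eq fun a b => dist_add_left _ _ _
  have h1 : ((finrank ℝ K : ℕ) : ℝ≥0∞) ≤ dimH S := by
    calc ((finrank ℝ K : ℕ) : ℝ≥0∞) = dimH (Metric.ball (0 : K) δ) :=
          (Real.dimH_of_mem_nhds (Metric.ball_mem_nhds _ hδpos)).symm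
      _ = dimH ((fun k : K => π g + k) '' Metric.ball (0 : K) δ) :=
          (htrans.dimH_image _).symm
      _ ≤ dimH (π '' S) := dimH_mono (by rintro _ ⟨k, hk, rfl⟩; exact claim k hk)
      _ ≤ dimH S := K.orthogonalProjectionOnto.lipschitz.dimH_image_le S
  rwa [hfr] at h1


/-- A subset `A` of a manifold `M` modelled on `ℝⁿ` is of `𝓗ˢ`-measure zero if for every
coordinate chart `(U, φ)` of `M` (i.e. every chart in the atlas), the `s`-dimensional
Hausdorff measure of `φ(A ∩ U)` in `ℝⁿ` vanishes. -/
def HausdorffMeasureZero {n : ℕ} {M : Type*} [TopologicalSpace M]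
    [ChartedSpace (EuclideanSpace ℝ (Fin n)) M] (s : ℝ) (A : Set M) : Prop :=
  ∀ e ∈ atlas (EuclideanSpace ℝ (Fin n)) M, μH[s] (e '' (A ∩ e.source)) = 0

/-- **key lemma.** Let `M` be a connected `n`-dimensional smooth manifold and
`E ⊆ M` a proper closed subset with nonempty interior.  Then the dimension of the topological
boundary (frontier) of `E` is at least `n - 1`, i.e. for every `s` with `0 < s < n - 1`,
`frontier E` is not of `𝓗ˢ`-measure zero. -/
theorem stmt6 {n : ℕ}
    {M : Type*} [TopologicalSpace M] [ChartedSpace (EuclideanSpace ℝ (Fin n)) M]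
    [IsManifold (𝓡 n) (⊤ : ℕ∞) M] [ConnectedSpace M]
    (E : Set M) (hE : IsClosed E) (hEne : E ≠ Set.univ)
    (hint : (interior E).Nonempty) :
    ∀ s : ℝ, 0 < s → s < (n : ℝ) - 1 →
      ¬ HausdorffMeasureZero (n := n) s (frontier E) := by
  intro s hs hsn hmz
  have hn1 : 1 ≤ n := by
    by_contra hlt
    have : n = 0 := by omega
    rw [this] at hsn
    norm_num at hsn
    linarith
  set A := interior E with hA
  set C := closure A with hC
  have hCE : C ⊆ E := closure_minimal interior_subset hE
  have hCne : C ≠ univ := fun h => hEne (univ_subset_iff.1 (h ▸ hCE))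
  have hCnonempty : C.Nonempty := hint.mono subset_closure
  have hfrne : (frontier C).Nonempty := by
    rw [nonempty_iff_ne_empty]
    intro h0
    rcases isClopen_iff.1 (isClopen_iff_frontier_eq_empty.2 h0) with h' | h'
    · exact hCnonempty.ne_empty h'
    · exact hCne h'
  obtain ⟨x, hxC⟩ := hfrne
  set e := chartAt (EuclideanSpace ℝ (Fin n)) x with he_def
  have he : e ∈ atlas (EuclideanSpace ℝ (Fin n)) M := chart_mem_atlas _ x
  have hxs : x ∈ e.source := mem_chart_source _ x
  set G := e.target ∩ e.symm ⁻¹' A with hG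
  set Hs := e.target ∩ e.symm ⁻¹' Cᶜ with hHs
  have hGopen : IsOpen G := e.isOpen_inter_preimage_symm isOpen_interior
  have hHopen : IsOpen Hs := e.isOpen_inter_preimage_symm isClosed_closure.isOpen_compl
  have hdisj : Disjoint G Hs := by
    rw [Set.disjoint_left]
    rintro p ⟨hpt, hpA⟩ ⟨_, hpC⟩
    exact hpC (subset_closure hpA)
  obtain ⟨r, hrpos, hrsub⟩ := Metric.isOpen_iff.1 e.open_target (e x) (e.map_source hxs)
  set U' := e.source ∩ e ⁻¹' Metric.ball (e x) r with hU'
  have hU'open : IsOpen U' := e.isOpen_inter_preimage Metric.isOpen_ball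
  have hxU' : x ∈ U' := ⟨hxs, by simp [Metric.mem_ball, hrpos]⟩
  have hxclA : x ∈ C := by
    have := hxC.1
    rwa [isClosed_closure.closure_eq] at this
  -- a point of G inside the ball
  have hgex : (G ∩ Metric.ball (e x) r).Nonempty := by
    obtain ⟨a, haU', haA⟩ := _root_.mem_closure_iff.1 hxclA U' hU'open hxU'
    refine ⟨e a, ⟨⟨e.map_source haU'.1, ?_⟩, haU'.2⟩⟩
    rw [mem_preimage, e.left_inv haU'.1]
    exact haA
  -- a point of Hs inside the ball
  have hhex : (Hs ∩ Metric.ball (e x) r).Nonempty := by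
    have hxni : x ∉ interior C := hxC.2
    have : ¬ U' ⊆ C := fun hsub => hxni (interior_maximal hsub hU'open hxU')
    obtain ⟨b, hbU', hbC⟩ := not_subset.1 this
    refine ⟨e b, ⟨⟨e.map_source hbU'.1, ?_⟩, hbU'.2⟩⟩
    rw [mem_preimage, e.left_inv hbU'.1]
    exact hbC
  have hdim := stmt6_aux hGopen hHopen hdisj hgex hhex
  set S := Metric.ball (e x) r \ (G ∪ Hs) with hS
  have hSsub : S ⊆ e '' (frontier E ∩ e.source) := by
    rintro p ⟨hpB, hpGH⟩
    have hpt : p ∈ e.target := hrsub hpB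
    have hq : e.symm p ∈ e.source := e.map_target hpt
    have hqC : e.symm p ∈ C := by
      by_contra hqC
      exact hpGH (Or.inr ⟨hpt, hqC⟩)
    have hqA : e.symm p ∉ A := fun hqA => hpGH (Or.inl ⟨hpt, hqA⟩)
    refine ⟨e.symm p, ⟨?_, hq⟩, e.right_inv hpt⟩
    rw [hE.frontier_eq]
    exact ⟨hCE hqC, hqA⟩
  -- measure-zero gives small dimension
  have hmz' := hmz e he
  have hdimle : dimH (e '' (frontier E ∩ e.source)) ≤ (s.toNNReal : ℝ≥0∞) := by
    apply dimH_le_of_hausdorffMeasure_ne_top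
    rw [Real.coe_toNNReal s hs.le, hmz']
    exact ENNReal.zero_ne_top
  have hchain : ((n - 1 : ℕ) : ℝ≥0∞) ≤ (s.toNNReal : ℝ≥0∞) :=
    hdim.trans ((dimH_mono hSsub).trans hdimle)
  have hreal : ((n - 1 : ℕ) : ℝ) ≤ s := by
    have h1 : (((n - 1 : ℕ) : ℝ≥0) : ℝ≥0∞) ≤ (s.toNNReal : ℝ≥0∞) := by
      simpa using hchain
    have h2 : ((n - 1 : ℕ) : ℝ≥0) ≤ s.toNNReal := ENNReal.coe_le_coe.1 h1
    calc ((n - 1 : ℕ) : ℝ) = (((n - 1 : ℕ) : ℝ≥0) : ℝ) := by norm_cast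
      _ ≤ (s.toNNReal : ℝ) := by exact_mod_cast h2
      _ = s := Real.coe_toNNReal s hs.le
  have : ((n - 1 : ℕ) : ℝ) = (n : ℝ) - 1 := by
    push_cast [hn1]
    ring
  linarith [hsn, hreal, this ▸ hreal]
end

section
/- Let E be a closed subset of ℝⁿ with E ≠ ℝⁿ and with nonempty interior. Then the Hausdorff dimension of the topological boundary (frontier) of E is at least n − 1. -/
open Set MeasureTheory ENNReal Metric Module

/-- A segment from an interior point to an exterior point meets the frontier. -/
lemma segment_inter_frontier_nonempty {X : Type*} [NormedAddCommGroup X] [NormedSpace ℝ X]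
    {E : Set X} {p q : X} (hp : p ∈ interior E) (hq : q ∉ closure E) :
    (segment ℝ p q ∩ frontier E).Nonempty := by
  by_contra h
  rw [not_nonempty_iff_eq_empty] at h
  have hpre : IsPreconnected (segment ℝ p q) := (convex_segment p q).isPreconnected
  have hsub : segment ℝ p q ⊆ interior E ∪ (closure E)ᶜ := by
    intro z hz
    by_cases hz1 : z ∈ closure E
    · left
      by_contra hz2
      have : z ∈ segment ℝ p q ∩ frontier E := ⟨hz, hz1, hz2⟩
      simp [h] at this
    · exact Or.inr hz1
  obtain ⟨z, _, hz1, hz2⟩ := hpre (interior E) (closure E)ᶜ isOpen_interior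
    isClosed_closure.isOpen_compl hsub ⟨p, left_mem_segment ℝ p q, hp⟩
    ⟨q, right_mem_segment ℝ p q, hq⟩
  exact hz2 (subset_closure (interior_subset hz1))

/-- Let `E` be a closed subset of `ℝⁿ` with `E ≠ ℝⁿ` and with nonempty
interior.  Then the Hausdorff dimension of the topological boundary (frontier) of `E` is at
least `n - 1`. -/
theorem stmt7 {n : ℕ} (E : Set (EuclideanSpace ℝ (Fin n)))
    (hE : IsClosed E) (hEne : E ≠ Set.univ) (hint : (interior E).Nonempty) :
    (n : ℝ≥0∞) - 1 ≤ dimH (frontier E) := by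
  obtain ⟨x, hx⟩ := hint
  have hEc : Eᶜ.Nonempty := by rw [nonempty_compl]; exact hEne
  obtain ⟨y, hy⟩ := hEc
  obtain ⟨r1, hr10, hr1⟩ := Metric.isOpen_iff.1 isOpen_interior x hx
  obtain ⟨r2, hr20, hr2⟩ := Metric.isOpen_iff.1 hE.isOpen_compl y hy
  set r : ℝ := min r1 r2 with hrdef
  have hr0 : 0 < r := lt_min hr10 hr20
  have hrx : ball x r ⊆ interior E := (ball_subset_ball (min_le_left _ _)).trans hr1
  have hry : ball y r ⊆ Eᶜ := (ball_subset_ball (min_le_right _ _)).trans hr2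
  set v : EuclideanSpace ℝ (Fin n) := y - x with hv
  have hvne : v ≠ 0 := by
    intro h
    rw [hv, sub_eq_zero] at h
    exact hy (interior_subset (h ▸ hx))
  set K : Submodule ℝ (EuclideanSpace ℝ (Fin n)) := (ℝ ∙ v)ᗮ with hK
  set π := K.orthogonalProjectionOnto with hπ
  have hπv : π v = 0 := Submodule.orthogonalProjectionOnto_orthogonalComplement_singleton_eq_zero v
  -- key: π '' ball x r ⊆ π '' frontier E
  have key : (π : EuclideanSpace ℝ (Fin n) → K) '' ball x r ⊆
      (π : EuclideanSpace ℝ (Fin n) → K) '' frontier E := by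
    rintro _ ⟨p, hp, rfl⟩
    have hpint : p ∈ interior E := hrx hp
    have hpv : p + v ∉ closure E := by
      rw [hE.closure_eq]
      apply hry
      rw [mem_ball] at hp ⊢
      have h1 : p + v - y = p - x := by rw [hv]; abel
      rw [dist_eq_norm, h1, ← dist_eq_norm]
      exact hp
    obtain ⟨z, hzseg, hzfr⟩ := segment_inter_frontier_nonempty hpint hpv
    refine ⟨z, hzfr, ?_⟩
    obtain ⟨a, b, ha, hb, hab, rfl⟩ := hzseg
    have h2 : a • p + b • (p + v) = p + b • v := by
      rw [smul_add, ← add_assoc, ← add_smul, hab, one_smul]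
    rw [h2, map_add, π.map_smul, hπv, smul_zero, add_zero]
  -- π '' ball x r contains a ball in K, hence has dimH = finrank K = n - 1
  have himg : ball (π x) r ⊆ (π : EuclideanSpace ℝ (Fin n) → K) '' ball x r := by
    intro k hk
    refine ⟨x + ((k : K) - π x : K), ?_, ?_⟩
    · rw [mem_ball, dist_eq_norm]
      have : x + ((k : K) - π x : K) - x = ((k - π x : K) : EuclideanSpace ℝ (Fin n)) := by abel
      rw [this]
      rw [mem_ball, dist_eq_norm] at hk
      simpa using hk
    · rw [map_add, Submodule.orthogonalProjectionOnto_mem_subspace_eq_self]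
      abel
  have hdim1 : dimH ((π : EuclideanSpace ℝ (Fin n) → K) '' ball x r) = finrank ℝ K := by
    have := Real.dimH_of_mem_nhds (x := π x)
      (s := (π : EuclideanSpace ℝ (Fin n) → K) '' ball x r)
      (Filter.mem_of_superset (Metric.ball_mem_nhds _ hr0) himg)
    exact this
  have hrank : finrank ℝ K = n - 1 := by
    have h1 : finrank ℝ (ℝ ∙ v) + finrank ℝ K = n := by
      rw [hK, Submodule.finrank_add_finrank_orthogonal]
      simp [finrank_euclideanSpace]
    rw [finrank_span_singleton hvne] at h1
    omega
  have hlip : dimH ((π : EuclideanSpace ℝ (Fin n) → K) '' frontier E) ≤ dimH (frontier E) :=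
    (π : EuclideanSpace ℝ (Fin n) →L[ℝ] K).lipschitz.dimH_image_le _
  calc (n : ℝ≥0∞) - 1 = ((n - 1 : ℕ) : ℝ≥0∞) := by
        rw [ENNReal.natCast_sub]; norm_num
    _ = dimH ((π : EuclideanSpace ℝ (Fin n) → K) '' ball x r) := by rw [hdim1, hrank]
    _ ≤ dimH ((π : EuclideanSpace ℝ (Fin n) → K) '' frontier E) := dimH_mono key
    _ ≤ dimH (frontier E) := hlip
end

section
/- Let E be a closed subset of ℝⁿ (n ≥ 2) with 0 ∉ E, and suppose the open ball B(e₁, δ) of radius δ ∈ (0, 1) centered at the first standard basis vector e₁ is contained in E. Then for every x with ‖x − e₁‖ < δ there exist a point y in the frontier of E and a scalar t ∈ (0, 1] with y = t·x; consequently the image of the frontier of E under the radial projection π(x) = x/‖x‖ contains the set {x/‖x‖ : ‖x − e₁‖ < δ}, which is a neighborhood of e₁ in the unit sphere Sⁿ⁻¹. -/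
open Set Metric

/-- Let `E` be a closed subset of `ℝⁿ` (`n ≥ 2`) with `0 ∉ E`, and suppose
the open ball `B(e₁, δ)` with `δ ∈ (0, 1)`, centered at the first standard basis vector `e₁`,
is contained in `E`.  Then for every `x` with `‖x - e₁‖ < δ` there exist a point `y` in the
frontier of `E` and a scalar `t ∈ (0, 1]` with `y = t • x`; consequently the image of the
frontier of `E` under the radial projection `π(x) = x / ‖x‖` contains the set
`{x / ‖x‖ : ‖x - e₁‖ < δ}`, which is a neighborhood of `e₁` in the unit sphere `Sⁿ⁻¹`. -/
theorem stmt10 {n : ℕ} (hn : 2 ≤ n) (E : Set (EuclideanSpace ℝ (Fin n)))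
    (hE : IsClosed E) (h0 : (0 : EuclideanSpace ℝ (Fin n)) ∉ E)
    (e₁ : EuclideanSpace ℝ (Fin n))
    (he₁ : ∀ i : Fin n, e₁ i = if i.val = 0 then 1 else 0)
    (δ : ℝ) (hδ : δ ∈ Set.Ioo (0 : ℝ) 1)
    (hball : Metric.ball e₁ δ ⊆ E) :
    (∀ x : EuclideanSpace ℝ (Fin n), ‖x - e₁‖ < δ →
        ∃ y ∈ frontier E, ∃ t ∈ Set.Ioc (0 : ℝ) 1, y = t • x) ∧
      {y : EuclideanSpace ℝ (Fin n) | ∃ x, ‖x - e₁‖ < δ ∧ y = ‖x‖⁻¹ • x} ⊆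
        (fun z : EuclideanSpace ℝ (Fin n) => ‖z‖⁻¹ • z) '' frontier E ∧
      {y : EuclideanSpace ℝ (Fin n) | ∃ x, ‖x - e₁‖ < δ ∧ y = ‖x‖⁻¹ • x} ∈
        nhdsWithin e₁ (Metric.sphere (0 : EuclideanSpace ℝ (Fin n)) 1) := by
  have key : ∀ x : EuclideanSpace ℝ (Fin n), ‖x - e₁‖ < δ →
      ∃ y ∈ frontier E, ∃ t ∈ Set.Ioc (0 : ℝ) 1, y = t • x := by
    intro x hx
    have hxE : x ∈ E := hball (mem_ball_iff_norm.2 hx)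
    set S : Set ℝ := {t : ℝ | t ∈ Set.Icc (0:ℝ) 1 ∧ t • x ∈ E} with hS
    have h1S : (1:ℝ) ∈ S := ⟨⟨zero_le_one, le_refl 1⟩, by simpa using hxE⟩
    have hSne : S.Nonempty := ⟨1, h1S⟩
    have hSbdd : BddBelow S := ⟨0, fun t ht => ht.1.1⟩
    have hScl : IsClosed S := by
      have hc : Continuous fun t : ℝ => t • x := by continuity
      exact (isClosed_Icc).inter (hE.preimage hc)
    set s := sInf S with hs
    have hsS : s ∈ S := hScl.csInf_mem hSne hSbdd
    have hs0 : 0 < s := by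
      rcases lt_or_eq_of_le hsS.1.1 with h | h
      · exact h
      · exfalso; apply h0; have := hsS.2; rw [← h] at this; simpa using this
    have hs1 : s ≤ 1 := csInf_le hSbdd h1S
    refine ⟨s • x, ?_, s, ⟨hs0, hs1⟩, rfl⟩
    rw [hE.frontier_eq]
    refine ⟨hsS.2, ?_⟩
    intro hint
    have hc : Continuous fun t : ℝ => t • x := by continuity
    have hU : IsOpen {t : ℝ | t • x ∈ interior E} := isOpen_interior.preimage hc
    rcases Metric.isOpen_iff.1 hU s hint with ⟨ε, hε, hball'⟩
    set t := max (s/2) (s - ε/2) with ht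
    have htlt : t < s := by
      apply max_lt (by linarith) (by linarith)
    have htpos : 0 < t := lt_of_lt_of_le (by linarith) (le_max_left _ _)
    have htmem : t ∈ Metric.ball s ε := by
      rw [Metric.mem_ball, Real.dist_eq, abs_of_nonpos (by linarith)]
      have : s - ε/2 ≤ t := le_max_right _ _
      linarith
    have htE : t • x ∈ E := interior_subset (hball' htmem)
    have : t ∈ S := ⟨⟨le_of_lt htpos, by linarith⟩, htE⟩
    exact absurd (csInf_le hSbdd this) (not_le.2 htlt)
  refine ⟨key, ?_, ?_⟩
  · rintro y ⟨x, hx, rfl⟩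
    rcases key x hx with ⟨z, hz, t, ⟨ht0, _⟩, rfl⟩
    have hxE : x ∈ E := hball (mem_ball_iff_norm.2 hx)
    have hx0 : x ≠ 0 := fun h => h0 (h ▸ hxE)
    refine ⟨t • x, hz, ?_⟩
    simp only [norm_smul, Real.norm_eq_abs, abs_of_pos ht0, mul_inv, smul_smul]
    congr 1
    have hnx : ‖x‖ ≠ 0 := norm_ne_zero_iff.2 hx0
    field_simp
  · have he1s : e₁ ∈ Metric.sphere (0 : EuclideanSpace ℝ (Fin n)) 1 := by
      rw [mem_sphere_iff_norm, sub_zero]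
      have : ‖e₁‖ = Real.sqrt (∑ i : Fin n, e₁ i ^ 2) := by
        rw [EuclideanSpace.norm_eq]
        congr 1; apply Finset.sum_congr rfl; intro i _
        rw [Real.norm_eq_abs, sq_abs]
      rw [this]
      have : (∑ i : Fin n, e₁ i ^ 2) = 1 := by
        have h2 : ∀ i : Fin n, e₁ i ^ 2 = if i = (⟨0, by omega⟩ : Fin n) then 1 else 0 := by
          intro i
          rw [he₁ i]
          by_cases h : i.val = 0
          · have : i = (⟨0, by omega⟩ : Fin n) := Fin.ext h
            simp [h, this]
          · have : i ≠ (⟨0, by omega⟩ : Fin n) := fun hc => h (by simp [hc])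
            simp [h, this]
        rw [Finset.sum_congr rfl (fun i _ => h2 i)]
        simp
      rw [this, Real.sqrt_one]
    apply mem_nhdsWithin.2
    refine ⟨Metric.ball e₁ δ, Metric.isOpen_ball, Metric.mem_ball_self hδ.1, ?_⟩
    rintro z ⟨hzb, hzs⟩
    refine ⟨z, mem_ball_iff_norm.1 hzb, ?_⟩
    have : ‖z‖ = 1 := by rwa [mem_sphere_iff_norm, sub_zero] at hzs
    simp [this]
end
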